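/- Let k be a field of characteristic 3, let ε₁ ∈ k with ε₁ ≠ 0, let φ₁ ∈ k with φ₁ ≠ 0, and let φ₂, φ₃, γ₁, γ₂, γ₃, γ₄, γ₅ ∈ k. Set b₂ = ε₁t², b₄ = t²(φ₃t² + φ₂t + φ₁), b₆ = t²(γ₅t⁴ + γ₄t³ + γ₃t² + γ₂t + γ₁), and Δ = −b₂²(b₂b₆ − b₄²) + b₄³. Then for all α ∈ k and all c ∈ k with c ≠ 0 one has Δ ≠ α·t⁶(t−1)²(t+1)²(t−c)². (This shows the configurations IV I₂ I₂ I₂ and IV I₄ I₂, with the type IV fibre of Lang's case 3C over t = 0 and at least two distinct multiplicative fibres normalized to 1 and −1, do not exist on a rational elliptic surface in characteristic 3.) -/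
import Mathlib


open Polynomial

theorem stmt10 {k : Type*} [Field k] [CharP k 3]
    (ε₁ : k) (hε₁ : ε₁ ≠ 0) (φ₁ : k) (hφ₁ : φ₁ ≠ 0)
    (φ₂ φ₃ γ₁ γ₂ γ₃ γ₄ γ₅ : k)
    (b₂ b₄ b₆ Δ : k[X])
    (hb₂ : b₂ = C ε₁ * X ^ 2)
    (hb₄ : b₄ = X ^ 2 * (C φ₃ * X ^ 2 + C φ₂ * X + C φ₁))
    (hb₆ : b₆ = X ^ 2 * (C γ₅ * X ^ 4 + C γ₄ * X ^ 3 + C γ₃ * X ^ 2 + C γ₂ * X + C γ₁))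
    (hΔ : Δ = -b₂ ^ 2 * (b₂ * b₆ - b₄ ^ 2) + b₄ ^ 3) :
    ∀ α c : k, c ≠ 0 →
      Δ ≠ C α * (X ^ 6 * (X - 1) ^ 2 * (X + 1) ^ 2 * (X - C c) ^ 2) := by
  intro α c hc h
  rw [hΔ, hb₂, hb₄, hb₆] at h
  set f : k[X] := C φ₃ * X ^ 2 + C φ₂ * X + C φ₁ with hf
  set g : k[X] := C γ₅ * X ^ 4 + C γ₄ * X ^ 3 + C γ₃ * X ^ 2 + C γ₂ * X + C γ₁ with hg
  have key : f ^ 3 + C ε₁ ^ 2 * X ^ 2 * f ^ 2 - C ε₁ ^ 3 * X ^ 2 * g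
      = C α * ((X - 1) ^ 2 * (X + 1) ^ 2 * (X - C c) ^ 2) := by
    have hX : (X : k[X]) ^ 6 ≠ 0 := pow_ne_zero _ X_ne_zero
    apply mul_left_cancel₀ hX
    linear_combination h
  -- evaluate at 0
  have e0 := congrArg (fun p => p.eval 0) key
  simp [hf, hg] at e0
  -- e0 should give φ₁ ^ 3 = α * c ^ 2 (up to signs)
  have hα : α ≠ 0 := by
    intro h0
    rw [h0] at e0
    simp at e0
    exact hφ₁ e0
  -- coefficient 1 via derivative at 0
  have e1 := congrArg (fun p => p.derivative.eval 0) key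
  simp [hf, hg, derivative_pow] at e1
  have h3 : (3 : k) = 0 := by
    exact_mod_cast CharP.cast_eq_zero k 3
  have : α * c = 0 := by linear_combination -e1 + (φ₁ ^ 2 * φ₂ + α * c) * h3
  rcases mul_eq_zero.mp this with h' | h'
  · exact hα h'
  · exact hc h'
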